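/- arXiv:2304.14215 — 2 statements merged into one kernel-verified Lean document; each statement's English description precedes it below -/
import Mathlib

section
/- For 1 < p < N, the identity ∫_{ℝ^N} |y|^{p/(p-1)} (1+|y|^{p/(p-1)})^{N/p−N−2} dy = (N(p-1)/p) ∫_{ℝ^N} (1+|y|^{p/(p-1)})^{N/p−N−2} dy holds, both integrals being finite. -/
open MeasureTheory Real Filter

noncomputable section

open Set in
private lemma aux_int_pohozaev (s q α : ℝ) (hs : -1 < s) (hα : α ≤ 0)
    (htop : s + q * α < -1) :
    IntegrableOn (fun r : ℝ => r ^ s * (1 + r ^ q) ^ α) (Ioi 0) := by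
  have hmeas : Measurable (fun r : ℝ => r ^ s * (1 + r ^ q) ^ α) := by fun_prop
  have h1 : IntegrableOn (fun r : ℝ => r ^ s * (1 + r ^ q) ^ α) (Ioc 0 1) := by
    have hb : IntegrableOn (fun r : ℝ => r ^ s) (Ioc 0 1) := by
      have := intervalIntegral.intervalIntegrable_rpow' (a := 0) (b := 1) hs
      rwa [intervalIntegrable_iff_integrableOn_Ioc_of_le (by norm_num)] at this
    refine Integrable.mono' hb hmeas.aestronglyMeasurable.restrict ?_
    filter_upwards [ae_restrict_mem measurableSet_Ioc] with r hr
    have hr0 : 0 < r := hr.1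
    have h1r : (1:ℝ) ≤ 1 + r ^ q := le_add_of_nonneg_right (rpow_nonneg hr0.le q)
    have hle : (1 + r ^ q) ^ α ≤ 1 := rpow_le_one_of_one_le_of_nonpos h1r hα
    rw [Real.norm_eq_abs, abs_of_nonneg (mul_nonneg (rpow_nonneg hr0.le s)
      (rpow_nonneg (by linarith) α))]
    calc r ^ s * (1 + r ^ q) ^ α ≤ r ^ s * 1 :=
          mul_le_mul_of_nonneg_left hle (rpow_nonneg hr0.le s)
      _ = r ^ s := mul_one _
  have h2 : IntegrableOn (fun r : ℝ => r ^ s * (1 + r ^ q) ^ α) (Ioi 1) := by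
    have hb : IntegrableOn (fun r : ℝ => r ^ (s + q * α)) (Ioi 1) :=
      integrableOn_Ioi_rpow_of_lt htop one_pos
    refine Integrable.mono' hb hmeas.aestronglyMeasurable.restrict ?_
    filter_upwards [ae_restrict_mem measurableSet_Ioi] with r hr
    have hr0 : (0:ℝ) < r := lt_trans one_pos hr
    have hrq : (0:ℝ) < r ^ q := rpow_pos_of_pos hr0 q
    have hle : (1 + r ^ q) ^ α ≤ (r ^ q) ^ α :=
      rpow_le_rpow_of_nonpos hrq (le_add_of_nonneg_left one_pos.le) hα
    rw [Real.norm_eq_abs, abs_of_nonneg (mul_nonneg (rpow_nonneg hr0.le s)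
      (rpow_nonneg (by linarith) α))]
    calc r ^ s * (1 + r ^ q) ^ α ≤ r ^ s * (r ^ q) ^ α :=
          mul_le_mul_of_nonneg_left hle (rpow_nonneg hr0.le s)
      _ = r ^ (s + q * α) := by
          rw [← Real.rpow_mul hr0.le, ← Real.rpow_add hr0]
  have : (Ioi (0:ℝ)) = Ioc 0 1 ∪ Ioi 1 := (Set.Ioc_union_Ioi_eq_Ioi (by norm_num)).symm
  rw [this]
  exact h1.union h2

private lemma aux_bound_pohozaev (N : ℕ) (q α : ℝ) (hq0 : 0 < q) (hα1 : α + 1 ≤ 0)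
    (hkey : q * (α + 1) = -(N : ℝ) - q) (t : ℝ) (ht : 0 ≤ t) :
    (1 + t ^ q) ^ (α + 1) ≤ 2 ^ ((N:ℝ) + q) * (1 + t) ^ (-((N:ℝ) + q)) := by
  have h1t : (0:ℝ) < 1 + t := by linarith
  have htq : (0:ℝ) ≤ t ^ q := rpow_nonneg ht q
  have hmax : (0:ℝ) < max 1 t := lt_max_of_lt_left one_pos
  have step1 : (1 + t) ^ q ≤ 2 ^ q * (1 + t ^ q) := by
    have h2m : 1 + t ≤ 2 * max 1 t := by
      rcases le_total t 1 with h | h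
      · rw [max_eq_left h]; linarith
      · rw [max_eq_right h]; linarith
    have hmq : (max 1 t) ^ q ≤ 1 + t ^ q := by
      rcases le_total t 1 with h | h
      · rw [max_eq_left h, one_rpow]; linarith
      · rw [max_eq_right h]; linarith
    calc (1 + t) ^ q ≤ (2 * max 1 t) ^ q := rpow_le_rpow h1t.le h2m hq0.le
      _ = 2 ^ q * (max 1 t) ^ q := mul_rpow (by norm_num) hmax.le
      _ ≤ 2 ^ q * (1 + t ^ q) := by
          exact mul_le_mul_of_nonneg_left hmq (rpow_nonneg (by norm_num) q)
  have step2 : (2:ℝ) ^ (-q) * (1 + t) ^ q ≤ 1 + t ^ q := by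
    calc (2:ℝ) ^ (-q) * (1 + t) ^ q ≤ (2:ℝ) ^ (-q) * ((2:ℝ) ^ q * (1 + t ^ q)) :=
          mul_le_mul_of_nonneg_left step1 (le_of_lt (rpow_pos_of_pos (by norm_num) (-q)))
      _ = 1 + t ^ q := by
          rw [← mul_assoc, ← Real.rpow_add (by norm_num)]
          simp
  have hlhs : (0:ℝ) < (2:ℝ) ^ (-q) * (1 + t) ^ q := by positivity
  have main : (1 + t ^ q) ^ (α + 1) ≤ ((2:ℝ) ^ (-q) * (1 + t) ^ q) ^ (α + 1) :=
    rpow_le_rpow_of_nonpos hlhs step2 hα1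
  refine main.trans (le_of_eq ?_)
  rw [mul_rpow (by positivity) (by positivity), ← Real.rpow_mul (by norm_num : (0:ℝ) ≤ 2),
    ← Real.rpow_mul h1t.le]
  rw [show -q * (α + 1) = (N:ℝ) + q by linarith, show q * (α + 1) = -((N:ℝ) + q) by linarith]

/-- for `1 < p < N`,
`∫ |y|^{p/(p-1)} (1+|y|^{p/(p-1)})^{N/p-N-2} dy
  = (N(p-1)/p) ∫ (1+|y|^{p/(p-1)})^{N/p-N-2} dy`, both integrals being finite. -/
theorem pohozaev_weight_identity (N : ℕ) (p : ℝ) (hp : 1 < p) (hpN : p < N) :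
    Integrable (fun y : EuclideanSpace ℝ (Fin N) =>
        ‖y‖ ^ (p / (p - 1)) * (1 + ‖y‖ ^ (p / (p - 1))) ^ ((N : ℝ) / p - N - 2)) ∧
    Integrable (fun y : EuclideanSpace ℝ (Fin N) =>
        (1 + ‖y‖ ^ (p / (p - 1))) ^ ((N : ℝ) / p - N - 2)) ∧
    (∫ y : EuclideanSpace ℝ (Fin N),
        ‖y‖ ^ (p / (p - 1)) * (1 + ‖y‖ ^ (p / (p - 1))) ^ ((N : ℝ) / p - N - 2)) =
      ((N : ℝ) * (p - 1) / p) *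
        ∫ y : EuclideanSpace ℝ (Fin N),
          (1 + ‖y‖ ^ (p / (p - 1))) ^ ((N : ℝ) / p - N - 2) := by
  have hp1 : (0:ℝ) < p - 1 := by linarith
  have hp0 : (0:ℝ) < p := by linarith
  set q : ℝ := p / (p - 1) with hqdef
  set α : ℝ := (N : ℝ) / p - N - 2 with hαdef
  have hq0 : 0 < q := div_pos hp0 hp1
  have hN1 : (1:ℝ) < N := lt_trans hp hpN
  have hN : 1 ≤ N := by exact_mod_cast hN1.le
  have hkey : q * (α + 1) = -(N : ℝ) - q := by
    rw [hqdef, hαdef]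
    field_simp
    ring
  have hqa : q * α = -(N:ℝ) - 2 * q := by
    have : q * (α + 1) = q * α + q := by ring
    linarith [hkey]
  have hα : α ≤ 0 := by nlinarith
  have hα1 : α + 1 ≤ 0 := by nlinarith
  have hbd := aux_bound_pohozaev N q α hq0 hα1 hkey
  -- N-dimensional integrability
  have hint : Integrable (fun y : EuclideanSpace ℝ (Fin N) =>
      (2:ℝ) ^ ((N:ℝ) + q) * (1 + ‖y‖) ^ (-((N:ℝ) + q))) :=
    (integrable_one_add_norm (by rw [finrank_euclideanSpace_fin]; linarith)).const_mul _
  have int1 : Integrable (fun y : EuclideanSpace ℝ (Fin N) =>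
      ‖y‖ ^ q * (1 + ‖y‖ ^ q) ^ α) := by
    have hm : Measurable (fun y : EuclideanSpace ℝ (Fin N) =>
        ‖y‖ ^ q * (1 + ‖y‖ ^ q) ^ α) := by fun_prop
    refine hint.mono' hm.aestronglyMeasurable ?_
    filter_upwards with y
    have ht : (0:ℝ) ≤ ‖y‖ := norm_nonneg y
    have hpos : (0:ℝ) < 1 + ‖y‖ ^ q := by positivity
    rw [Real.norm_eq_abs, abs_of_nonneg (by positivity)]
    have h1 : ‖y‖ ^ q * (1 + ‖y‖ ^ q) ^ α ≤ (1 + ‖y‖ ^ q) ^ (α + 1) := by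
      have e : (1 + ‖y‖ ^ q) ^ (α + 1) = (1 + ‖y‖ ^ q) * (1 + ‖y‖ ^ q) ^ α := by
        rw [Real.rpow_add hpos, Real.rpow_one]; ring
      rw [e]
      exact mul_le_mul_of_nonneg_right (by linarith [rpow_nonneg ht q])
        (rpow_nonneg hpos.le α)
    exact h1.trans (hbd _ ht)
  have int0 : Integrable (fun y : EuclideanSpace ℝ (Fin N) =>
      (1 + ‖y‖ ^ q) ^ α) := by
    have hm : Measurable (fun y : EuclideanSpace ℝ (Fin N) =>
        (1 + ‖y‖ ^ q) ^ α) := by fun_prop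
    refine hint.mono' hm.aestronglyMeasurable ?_
    filter_upwards with y
    have ht : (0:ℝ) ≤ ‖y‖ := norm_nonneg y
    have hpos : (0:ℝ) < 1 + ‖y‖ ^ q := by positivity
    rw [Real.norm_eq_abs, abs_of_nonneg (by positivity)]
    have h1 : (1 + ‖y‖ ^ q) ^ α ≤ (1 + ‖y‖ ^ q) ^ (α + 1) :=
      rpow_le_rpow_of_exponent_le (by linarith [rpow_nonneg ht q]) (by linarith)
    exact h1.trans (hbd _ ht)
  refine ⟨int1, int0, ?_⟩
  -- 1-D integrability
  have hI0 : IntegrableOn (fun r : ℝ => r ^ ((N:ℝ) - 1) * (1 + r ^ q) ^ α) (Set.Ioi 0) :=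
    aux_int_pohozaev _ q α (by linarith) hα (by linarith)
  have hI1 : IntegrableOn (fun r : ℝ => r ^ ((N:ℝ) - 1 + q) * (1 + r ^ q) ^ α) (Set.Ioi 0) :=
    aux_int_pohozaev _ q α (by linarith) hα (by linarith)
  -- Integration by parts
  set F : ℝ → ℝ := fun r => r ^ (N:ℝ) * (1 + r ^ q) ^ (α + 1) with hFdef
  have hderiv : ∀ r ∈ Set.Ioi (0:ℝ), HasDerivAt F
      ((N:ℝ) * (r ^ ((N:ℝ) - 1) * (1 + r ^ q) ^ α)
        - q * (r ^ ((N:ℝ) - 1 + q) * (1 + r ^ q) ^ α)) r := by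
    intro r hr
    have hr0 : (0:ℝ) < r := hr
    have hpos : (0:ℝ) < 1 + r ^ q := by positivity
    have h1 : HasDerivAt (fun r : ℝ => r ^ (N:ℝ)) ((N:ℝ) * r ^ ((N:ℝ) - 1)) r :=
      Real.hasDerivAt_rpow_const (Or.inl hr0.ne')
    have h2 : HasDerivAt (fun r : ℝ => 1 + r ^ q) (q * r ^ (q - 1)) r :=
      (Real.hasDerivAt_rpow_const (Or.inl hr0.ne')).const_add 1
    have h3 : HasDerivAt (fun x : ℝ => x ^ (α + 1))
        ((α + 1) * (1 + r ^ q) ^ (α + 1 - 1)) (1 + r ^ q) :=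
      Real.hasDerivAt_rpow_const (Or.inl hpos.ne')
    have h4 : HasDerivAt (fun r : ℝ => (1 + r ^ q) ^ (α + 1))
        ((α + 1) * (1 + r ^ q) ^ (α + 1 - 1) * (q * r ^ (q - 1))) r := by
      have := h3.comp r h2; exact this
    have h5 : HasDerivAt F _ r := h1.mul h4
    convert h5 using 1
    have e1 : (1 + r ^ q) ^ (α + 1) = (1 + r ^ q) ^ α * (1 + r ^ q) := by
      rw [Real.rpow_add hpos, Real.rpow_one]
    have e2 : r ^ ((N:ℝ) - 1 + q) = r ^ ((N:ℝ) - 1) * r ^ q := Real.rpow_add hr0 _ _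
    have e3 : r ^ (N:ℝ) * r ^ (q - 1) = r ^ ((N:ℝ) - 1) * r ^ q := by
      rw [← Real.rpow_add hr0, ← Real.rpow_add hr0]
      congr 1
      ring
    have e4 : α + 1 - 1 = α := by ring
    rw [e4, e1, e2]
    linear_combination (-(α + 1) * (1 + r ^ q) ^ α * q) * e3
      - (r ^ ((N:ℝ) - 1) * r ^ q * (1 + r ^ q) ^ α) * hkey
  have htend : Tendsto F atTop (nhds 0) := by
    apply tendsto_of_tendsto_of_tendsto_of_le_of_le' (tendsto_const_nhds (α := ℝ))
      (tendsto_rpow_neg_atTop hq0)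
    · filter_upwards [eventually_ge_atTop (1:ℝ)] with r hr
      have hr0 : (0:ℝ) < r := lt_of_lt_of_le one_pos hr
      rw [hFdef]
      positivity
    · filter_upwards [eventually_ge_atTop (1:ℝ)] with r hr
      have hr0 : (0:ℝ) < r := lt_of_lt_of_le one_pos hr
      have hrq : (0:ℝ) < r ^ q := rpow_pos_of_pos hr0 q
      have h1 : (1 + r ^ q) ^ (α + 1) ≤ (r ^ q) ^ (α + 1) :=
        rpow_le_rpow_of_nonpos hrq (le_add_of_nonneg_left one_pos.le) hα1
      rw [hFdef]
      calc r ^ (N:ℝ) * (1 + r ^ q) ^ (α + 1) ≤ r ^ (N:ℝ) * (r ^ q) ^ (α + 1) :=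
            mul_le_mul_of_nonneg_left h1 (rpow_nonneg hr0.le _)
        _ = r ^ ((N:ℝ) + q * (α + 1)) := by
            rw [← Real.rpow_mul hr0.le, ← Real.rpow_add hr0]
        _ = r ^ (-q) := by rw [hkey]; ring_nf
  have hcont : ContinuousWithinAt F (Set.Ici 0) 0 := by
    have h0q : (0:ℝ) ^ q = 0 := zero_rpow hq0.ne'
    have c1 : ContinuousAt (fun r : ℝ => r ^ (N:ℝ)) 0 :=
      Real.continuousAt_rpow_const 0 _ (Or.inr (by positivity))
    have c2 : ContinuousAt (fun r : ℝ => (1 + r ^ q) ^ (α + 1)) 0 := by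
      have ci : ContinuousAt (fun r : ℝ => 1 + r ^ q) 0 :=
        (Real.continuousAt_rpow_const 0 _ (Or.inr hq0.le)).const_add 1
      exact ci.rpow_const (Or.inl (by simp [h0q]))
    rw [hFdef]
    exact (c1.mul c2).continuousWithinAt
  have hF0 : F 0 = 0 := by
    rw [hFdef]
    simp [zero_rpow (by positivity : (N:ℝ) ≠ 0)]
  have f'int : IntegrableOn (fun r : ℝ =>
      (N:ℝ) * (r ^ ((N:ℝ) - 1) * (1 + r ^ q) ^ α)
        - q * (r ^ ((N:ℝ) - 1 + q) * (1 + r ^ q) ^ α)) (Set.Ioi 0) :=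
    (hI0.const_mul _).sub (hI1.const_mul _)
  have hibp := MeasureTheory.integral_Ioi_of_hasDerivAt_of_tendsto hcont hderiv f'int htend
  rw [hF0, sub_zero, integral_sub (hI0.const_mul _) (hI1.const_mul _),
    integral_const_mul, integral_const_mul] at hibp
  -- ratio of the 1-D integrals
  have hratio : (∫ r in Set.Ioi (0:ℝ), r ^ ((N:ℝ) - 1 + q) * (1 + r ^ q) ^ α)
      = ((N:ℝ) / q) * ∫ r in Set.Ioi (0:ℝ), r ^ ((N:ℝ) - 1) * (1 + r ^ q) ^ α := by
    field_simp
    linarith [hibp]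
  -- polar coordinates
  haveI : Nontrivial (EuclideanSpace ℝ (Fin N)) :=
    Module.nontrivial_of_finrank_pos (R := ℝ) (by rw [finrank_euclideanSpace_fin]; omega)
  have conv1 : ∀ r ∈ Set.Ioi (0:ℝ),
      r ^ (N - 1) * (r ^ q * (1 + r ^ q) ^ α) = r ^ ((N:ℝ) - 1 + q) * (1 + r ^ q) ^ α := by
    intro r hr
    have hr0 : (0:ℝ) < r := hr
    rw [← Real.rpow_natCast r (N - 1), Nat.cast_sub hN, Nat.cast_one, Real.rpow_add hr0]
    ring
  have conv0 : ∀ r ∈ Set.Ioi (0:ℝ),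
      r ^ (N - 1) * ((1 + r ^ q) ^ α) = r ^ ((N:ℝ) - 1) * (1 + r ^ q) ^ α := by
    intro r hr
    rw [← Real.rpow_natCast r (N - 1), Nat.cast_sub hN, Nat.cast_one]
  have polar1 : (∫ y : EuclideanSpace ℝ (Fin N), ‖y‖ ^ q * (1 + ‖y‖ ^ q) ^ α)
      = (N:ℝ) * (((volume (Metric.ball (0 : EuclideanSpace ℝ (Fin N)) 1)).toReal) *
          ∫ r in Set.Ioi (0:ℝ), r ^ ((N:ℝ) - 1 + q) * (1 + r ^ q) ^ α) := by
    have := MeasureTheory.integral_fun_norm_addHaar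
      (volume : Measure (EuclideanSpace ℝ (Fin N)))
      (fun t : ℝ => t ^ q * (1 + t ^ q) ^ α)
    simp only [finrank_euclideanSpace_fin, nsmul_eq_mul, smul_eq_mul] at this
    rw [this, setIntegral_congr_fun measurableSet_Ioi conv1]
    rfl
  have polar0 : (∫ y : EuclideanSpace ℝ (Fin N), (1 + ‖y‖ ^ q) ^ α)
      = (N:ℝ) * (((volume (Metric.ball (0 : EuclideanSpace ℝ (Fin N)) 1)).toReal) *
          ∫ r in Set.Ioi (0:ℝ), r ^ ((N:ℝ) - 1) * (1 + r ^ q) ^ α) := by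
    have := MeasureTheory.integral_fun_norm_addHaar
      (volume : Measure (EuclideanSpace ℝ (Fin N)))
      (fun t : ℝ => (1 + t ^ q) ^ α)
    simp only [finrank_euclideanSpace_fin, nsmul_eq_mul, smul_eq_mul] at this
    rw [this, setIntegral_congr_fun measurableSet_Ioi conv0]
    rfl
  rw [polar1, polar0, hratio]
  have hNq : (N:ℝ) / q = (N:ℝ) * (p - 1) / p := by
    rw [hqdef]
    field_simp
  rw [hNq]
  ring
end
end

section
/- For 1 < p < N, the integral ∫_{ℝ^N} (|y|^{p/(p-1)} − (p−1)) (1+|y|^{p/(p-1)})^{−(N+2−N/p)} dy equals ((N−p)(p−1)/p) ∫_{ℝ^N} (1+|y|^{p/(p-1)})^{N/p−N−2} dy, and in particular is strictly positive. -/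
open MeasureTheory Real Filter
open scoped ENNReal

noncomputable section

open Set in
lemma myContOn {n : ℕ} {q b : ℝ} (hq : 0 < q) :
    ContinuousOn (fun r : ℝ => r ^ n * (1 + r ^ q) ^ (-b)) (Ioi 0) := by
  intro r hr
  have hr0 : (0:ℝ) < r := hr
  have h1 : ContinuousAt (fun r : ℝ => r ^ q) r :=
    Real.continuousAt_rpow_const r q (Or.inl hr0.ne')
  have hs : (0:ℝ) < 1 + r ^ q := by
    have : (0:ℝ) ≤ r ^ q := Real.rpow_nonneg hr0.le q
    linarith
  exact ((continuous_pow n).continuousAt.mul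
    ((continuousAt_const.add h1).rpow_const (Or.inl hs.ne'))).continuousWithinAt

open Set in
lemma myIntegrableOn {n : ℕ} {q b : ℝ} (hq : 0 < q) (hb : (n : ℝ) + 1 < q * b) :
    IntegrableOn (fun r : ℝ => r ^ n * (1 + r ^ q) ^ (-b)) (Ioi 0) := by
  have hb0 : 0 < b := by nlinarith [Nat.cast_nonneg (α := ℝ) n, hq]
  have key : ∀ r : ℝ, 0 < r → 0 < 1 + r ^ q := fun r hr => by
    have : (0:ℝ) ≤ r ^ q := Real.rpow_nonneg hr.le q
    linarith
  have h1 : IntegrableOn (fun r : ℝ => r ^ n * (1 + r ^ q) ^ (-b)) (Ioc 0 1) := by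
    apply Integrable.mono' (g := fun _ : ℝ => (1:ℝ)) (integrable_const 1)
    · exact ((myContOn hq).mono Ioc_subset_Ioi_self).aestronglyMeasurable measurableSet_Ioc
    · filter_upwards [ae_restrict_mem measurableSet_Ioc] with r hr
      have hr0 : (0:ℝ) < r := hr.1
      have hs := key r hr0
      rw [norm_mul, Real.norm_eq_abs, Real.norm_eq_abs, abs_of_nonneg (by positivity),
        abs_of_nonneg (by positivity : (0:ℝ) ≤ (1 + r ^ q) ^ (-b))]
      have e1 : r ^ n ≤ 1 := pow_le_one₀ hr0.le hr.2
      have e2 : (1 + r ^ q) ^ (-b) ≤ 1 :=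
        Real.rpow_le_one_of_one_le_of_nonpos
          (by nlinarith [Real.rpow_nonneg hr0.le q]) (by linarith)
      nlinarith [Real.rpow_nonneg hs.le (-b)]
  have h2 : IntegrableOn (fun r : ℝ => r ^ n * (1 + r ^ q) ^ (-b)) (Ioi 1) := by
    apply Integrable.mono' (integrableOn_Ioi_rpow_of_lt
      (show (n:ℝ) - q * b < -1 by linarith) one_pos)
    · exact ((myContOn hq).mono (Ioi_subset_Ioi zero_le_one)).aestronglyMeasurable
        measurableSet_Ioi
    · filter_upwards [ae_restrict_mem measurableSet_Ioi] with r hr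
      have hr1 : (1:ℝ) < r := hr
      have hr0 : (0:ℝ) < r := lt_trans one_pos hr1
      have hs := key r hr0
      have hq0 : (0:ℝ) < r ^ q := Real.rpow_pos_of_pos hr0 q
      rw [norm_mul, Real.norm_eq_abs, Real.norm_eq_abs, abs_of_nonneg (by positivity),
        abs_of_nonneg (by positivity : (0:ℝ) ≤ (1 + r ^ q) ^ (-b))]
      have e2 : (1 + r ^ q) ^ (-b) ≤ (r ^ q) ^ (-b) :=
        Real.rpow_le_rpow_of_nonpos hq0 (by linarith) (by linarith)
      have e3 : (r ^ q) ^ (-b) = r ^ (q * (-b)) := by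
        rw [← Real.rpow_mul hr0.le]
      have e4 : r ^ n * r ^ (q * (-b)) = r ^ ((n:ℝ) - q * b) := by
        rw [← Real.rpow_natCast r n, ← Real.rpow_add hr0]
        ring_nf
      calc r ^ n * (1 + r ^ q) ^ (-b) ≤ r ^ n * (r ^ q) ^ (-b) := by
            have hpn : (0:ℝ) ≤ r ^ n := by positivity
            nlinarith
        _ = r ^ ((n:ℝ) - q * b) := by rw [e3, e4]
  have h12 := h1.union h2
  rwa [Ioc_union_Ioi_eq_Ioi zero_le_one] at h12

open Set in
lemma key1d {N : ℕ} {q a : ℝ} (hN : 1 ≤ N) (hq : 0 < q) (hqa : q * (a - 1) = N + q) :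
    ∫ r in Ioi (0:ℝ), r ^ (N - 1) * (1 + r ^ q) ^ (1 - a)
      = (a - 1) * ∫ r in Ioi (0:ℝ), r ^ (N - 1) * (1 + r ^ q) ^ (-a) := by
  have hN1 : ((N - 1 : ℕ) : ℝ) = (N : ℝ) - 1 := by
    rw [Nat.cast_sub hN]; norm_num
  have hN0 : (1:ℝ) ≤ (N:ℝ) := by exact_mod_cast hN
  have ha1 : 0 < a - 1 := by
    have h : 0 < q * (a - 1) := by rw [hqa]; positivity
    nlinarith
  have hInt1 : IntegrableOn (fun r : ℝ => r ^ (N - 1) * (1 + r ^ q) ^ (1 - a)) (Ioi 0) := by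
    have h := myIntegrableOn (n := N - 1) (b := a - 1) hq (by rw [hN1]; linarith [hqa])
    simpa [neg_sub] using h
  have hInt2 : IntegrableOn (fun r : ℝ => r ^ (N - 1) * (1 + r ^ q) ^ (-a)) (Ioi 0) := by
    refine myIntegrableOn (n := N - 1) hq ?_
    rw [hN1]
    nlinarith [hqa]
  set F : ℝ → ℝ := fun r => r ^ N * (1 + r ^ q) ^ (1 - a) with hF
  set f' : ℝ → ℝ := fun r => (-q) * (r ^ (N - 1) * (1 + r ^ q) ^ (1 - a))
      + (q * (a - 1)) * (r ^ (N - 1) * (1 + r ^ q) ^ (-a)) with hf'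
  have hderiv : ∀ r ∈ Ioi (0:ℝ), HasDerivAt F (f' r) r := by
    intro r hr
    have hr0 : (0:ℝ) < r := hr
    have hs : (0:ℝ) < 1 + r ^ q := by
      have : (0:ℝ) ≤ r ^ q := Real.rpow_nonneg hr0.le q
      linarith
    have h1 : HasDerivAt (fun r : ℝ => r ^ N) ((N:ℝ) * r ^ (N - 1)) r := hasDerivAt_pow N r
    have h2 : HasDerivAt (fun r : ℝ => 1 + r ^ q) (q * r ^ (q - 1)) r :=
      (Real.hasDerivAt_rpow_const (Or.inl hr0.ne')).const_add 1
    have h3 := h2.rpow_const (p := 1 - a) (Or.inl hs.ne')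
    have h4 := h1.mul h3
    refine h4.congr_deriv ?_
    symm
    simp only [hf']
    have e0 : (1:ℝ) - a - 1 = -a := by ring
    rw [e0]
    have e1 : (1 + r ^ q) ^ (1 - a) = (1 + r ^ q) * (1 + r ^ q) ^ (-a) := by
      rw [show (1:ℝ) - a = 1 + (-a) by ring, Real.rpow_add hs, Real.rpow_one]
    have e2 : r ^ N = r ^ (N - 1) * r := by
      conv_lhs => rw [show N = (N - 1) + 1 from (Nat.sub_add_cancel hN).symm]
      rw [pow_succ]
    have e3 : r * r ^ (q - 1) = r ^ q := by
      nth_rewrite 2 [show q = 1 + (q - 1) by ring]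
      rw [Real.rpow_add hr0, Real.rpow_one]
    have hn : (N:ℝ) = q * (a - 1) - q := by linarith
    rw [e1, e2, hn]
    linear_combination (r ^ (N - 1) * (1 + r ^ q) ^ (-a) * q * (a - 1)) * e3
  have hf'int : IntegrableOn f' (Ioi 0) := (hInt1.const_mul _).add (hInt2.const_mul _)
  have hcw : ContinuousWithinAt F (Ici 0) 0 := by
    apply ContinuousAt.continuousWithinAt
    have h1 : ContinuousAt (fun r : ℝ => r ^ q) 0 :=
      Real.continuousAt_rpow_const 0 q (Or.inr hq.le)
    have h2 : ContinuousAt (fun r : ℝ => 1 + r ^ q) 0 := continuousAt_const.add h1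
    have h3 : (1:ℝ) + (0:ℝ) ^ q ≠ 0 := by rw [Real.zero_rpow hq.ne']; norm_num
    exact (continuous_pow N).continuousAt.mul (h2.rpow_const (Or.inl h3))
  have hlim : Tendsto F atTop (nhds 0) := by
    have h0 : Tendsto (fun r : ℝ => r ^ (-q)) atTop (nhds 0) := tendsto_rpow_neg_atTop hq
    refine tendsto_of_tendsto_of_tendsto_of_le_of_le' tendsto_const_nhds h0 ?_ ?_
    · filter_upwards [eventually_gt_atTop (0:ℝ)] with r hr
      have hs : (0:ℝ) < 1 + r ^ q := by
        have : (0:ℝ) ≤ r ^ q := Real.rpow_nonneg hr.le q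
        linarith
      have := Real.rpow_nonneg hs.le (1 - a)
      have : (0:ℝ) ≤ r ^ N := by positivity
      simp only [hF]
      positivity
    · filter_upwards [eventually_ge_atTop (1:ℝ)] with r hr
      have hr0 : (0:ℝ) < r := lt_of_lt_of_le one_pos hr
      have hq0 : (0:ℝ) < r ^ q := Real.rpow_pos_of_pos hr0 q
      have hs : (0:ℝ) < 1 + r ^ q := by linarith
      have e2 : (1 + r ^ q) ^ (1 - a) ≤ (r ^ q) ^ (1 - a) :=
        Real.rpow_le_rpow_of_nonpos hq0 (by linarith) (by linarith)
      have e3 : r ^ N * (r ^ q) ^ (1 - a) = r ^ (-q) := by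
        rw [← Real.rpow_natCast r N, ← Real.rpow_mul hr0.le, ← Real.rpow_add hr0]
        congr 1
        linarith [hqa]
      calc F r ≤ r ^ N * (r ^ q) ^ (1 - a) := by
            have hpn : (0:ℝ) ≤ r ^ N := by positivity
            simp only [hF]
            nlinarith
        _ = r ^ (-q) := e3
  have hIBP := integral_Ioi_of_hasDerivAt_of_tendsto hcw hderiv hf'int hlim
  have hF0 : F 0 = 0 := by
    simp only [hF]
    rw [zero_pow (by omega : N ≠ 0), zero_mul]
  rw [hF0, sub_zero] at hIBP
  rw [hf'] at hIBP
  rw [integral_add (hInt1.const_mul _) (hInt2.const_mul _), integral_const_mul,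
    integral_const_mul] at hIBP
  have hq' : q ≠ 0 := hq.ne'
  apply mul_left_cancel₀ hq'
  nlinarith [hIBP]

open Set in
/-- for `1 < p < N`,
`∫ (|y|^{p/(p-1)} - (p-1)) (1+|y|^{p/(p-1)})^{-(N+2-N/p)} dy
  = ((N-p)(p-1)/p) ∫ (1+|y|^{p/(p-1)})^{N/p-N-2} dy > 0`. -/
theorem pohozaev_residue_positive (N : ℕ) (p : ℝ) (hp : 1 < p) (hpN : p < N) :
    (∫ y : EuclideanSpace ℝ (Fin N),
        (‖y‖ ^ (p / (p - 1)) - (p - 1)) *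
          (1 + ‖y‖ ^ (p / (p - 1))) ^ (-((N : ℝ) + 2 - N / p))) =
      (((N : ℝ) - p) * (p - 1) / p) *
        ∫ y : EuclideanSpace ℝ (Fin N),
          (1 + ‖y‖ ^ (p / (p - 1))) ^ ((N : ℝ) / p - N - 2) ∧
    0 < ∫ y : EuclideanSpace ℝ (Fin N),
        (‖y‖ ^ (p / (p - 1)) - (p - 1)) *
          (1 + ‖y‖ ^ (p / (p - 1))) ^ (-((N : ℝ) + 2 - N / p)) := by
  have hp1 : (0:ℝ) < p - 1 := by linarith
  have hp0 : (0:ℝ) < p := by linarith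
  have hN1 : (1:ℝ) < (N:ℝ) := lt_trans hp hpN
  have hNpos : 1 ≤ N := by exact_mod_cast hN1.le
  set q : ℝ := p / (p - 1) with hq_def
  set a : ℝ := (N : ℝ) + 2 - N / p with ha_def
  have hq : 0 < q := by positivity
  have hqa : q * (a - 1) = (N:ℝ) + q := by
    rw [hq_def, ha_def]
    field_simp [hq_def, ha_def]
    ring
  have ha1 : 0 < a - 1 := by
    have h : 0 < q * (a - 1) := by rw [hqa]; positivity
    nlinarith
  -- rewrite the second exponent
  have hexp : ((N : ℝ) / p - N - 2) = -((N : ℝ) + 2 - N / p) := by ring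
  -- nontriviality
  haveI : Nonempty (Fin N) := ⟨⟨0, by omega⟩⟩
  haveI : Nontrivial (EuclideanSpace ℝ (Fin N)) := by
    infer_instance
  -- polar coordinates
  have hdim : Module.finrank ℝ (EuclideanSpace ℝ (Fin N)) = N := finrank_euclideanSpace_fin
  set C : ℝ := (N : ℝ) * (volume (Metric.ball (0 : EuclideanSpace ℝ (Fin N)) 1)).toReal with hC
  have hCpos : 0 < C := by
    rw [hC]
    apply mul_pos (by positivity)
    rw [ENNReal.toReal_pos_iff]
    exact ⟨Metric.measure_ball_pos volume _ one_pos, measure_ball_lt_top⟩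
  have hpolar : ∀ f : ℝ → ℝ,
      (∫ y : EuclideanSpace ℝ (Fin N), f ‖y‖)
        = C * ∫ r in Ioi (0:ℝ), r ^ (N - 1) * f r := by
    intro f
    rw [MeasureTheory.integral_fun_norm_addHaar volume f]
    simp only [hdim, hC, nsmul_eq_mul, smul_eq_mul]
    rw [mul_assoc, ← integral_const_mul]
    rw [integral_const_mul, measureReal_def]
  have key : ∀ r : ℝ, 0 < r → 0 < 1 + r ^ q := fun r hr => by
    have : (0:ℝ) ≤ r ^ q := Real.rpow_nonneg hr.le q
    linarith
  -- integrals
  set I₁ : ℝ := ∫ r in Ioi (0:ℝ), r ^ (N - 1) * (1 + r ^ q) ^ (1 - a) with hI₁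
  set I₂ : ℝ := ∫ r in Ioi (0:ℝ), r ^ (N - 1) * (1 + r ^ q) ^ (-a) with hI₂
  have hNc : ((N - 1 : ℕ) : ℝ) = (N : ℝ) - 1 := by rw [Nat.cast_sub hNpos]; norm_num
  have hInt1 : IntegrableOn (fun r : ℝ => r ^ (N - 1) * (1 + r ^ q) ^ (1 - a)) (Ioi 0) := by
    have h := myIntegrableOn (n := N - 1) (b := a - 1) hq (by rw [hNc]; linarith [hqa])
    simpa [neg_sub] using h
  have hInt2 : IntegrableOn (fun r : ℝ => r ^ (N - 1) * (1 + r ^ q) ^ (-a)) (Ioi 0) := by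
    refine myIntegrableOn (n := N - 1) hq ?_
    rw [hNc]; nlinarith [hqa]
  have hkey : I₁ = (a - 1) * I₂ := key1d hNpos hq hqa
  -- first integral in polar form
  have hLHS : (∫ y : EuclideanSpace ℝ (Fin N),
        (‖y‖ ^ q - (p - 1)) * (1 + ‖y‖ ^ q) ^ (-a)) = C * (I₁ - p * I₂) := by
    rw [hpolar (fun r => (r ^ q - (p - 1)) * (1 + r ^ q) ^ (-a))]
    congr 1
    rw [hI₁, hI₂, ← integral_const_mul p, ← integral_sub hInt1 (hInt2.const_mul p)]
    apply setIntegral_congr_fun measurableSet_Ioi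
    intro r hr
    have hr0 : (0:ℝ) < r := hr
    have hs := key r hr0
    have e1 : (1 + r ^ q) ^ (1 - a) = (1 + r ^ q) * (1 + r ^ q) ^ (-a) := by
      rw [show (1:ℝ) - a = 1 + (-a) by ring, Real.rpow_add hs, Real.rpow_one]
    simp only
    rw [e1]
    ring
  have hRHS : (∫ y : EuclideanSpace ℝ (Fin N), (1 + ‖y‖ ^ q) ^ (-a)) = C * I₂ := by
    rw [hpolar (fun r => (1 + r ^ q) ^ (-a))]
  have hI₂pos : 0 < I₂ := by
    have hae : 0 ≤ᶠ[ae (volume.restrict (Ioi (0:ℝ)))]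
        fun r : ℝ => r ^ (N - 1) * (1 + r ^ q) ^ (-a) := by
      filter_upwards [ae_restrict_mem measurableSet_Ioi] with r hr
      have hr0 : (0:ℝ) < r := hr
      have hs := key r hr0
      positivity
    rw [hI₂, setIntegral_pos_iff_support_of_nonneg_ae hae hInt2]
    have hvol : (0:ℝ≥0∞) < volume (Ioi (0:ℝ)) := by simp [Real.volume_Ioi]
    refine lt_of_lt_of_le hvol (measure_mono ?_)
    intro r hr
    have hr0 : (0:ℝ) < r := hr
    have hs := key r hr0
    refine ⟨?_, hr⟩
    simp only [Function.mem_support]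
    positivity
  have hcoef : a - 1 - p = ((N:ℝ) - p) * (p - 1) / p := by
    rw [ha_def]
    field_simp
    ring
  constructor
  · rw [hexp, hLHS, hRHS, hkey]
    linear_combination (C * I₂) * hcoef
  · rw [hLHS, hkey]
    have : (0:ℝ) < a - 1 - p := by
      rw [hcoef]
      exact div_pos (mul_pos (by linarith) hp1) hp0
    have h2 : (a - 1) * I₂ - p * I₂ = (a - 1 - p) * I₂ := by ring
    rw [h2]
    positivity

end
end
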